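/- If f̂ ∈ W^m_2 minimizes ψ over W^m_2, then for every k = 0, 1, …, m−1 one has (1/n) Σ_{i=1}^n σ(t_i)^{-2} (f̂(t_i) − y_i) t_i^k = 0. -/

import Mathlib

open MeasureTheory Set

noncomputable section

/-- `MemW m f fm` says that `f` belongs to the Sobolev class `W^m_2` on `[0,1]`:
`f` is `(m-1)`-times continuously differentiable on `[0,1]`, its `(m-1)`-th derivative is
absolutely continuous with a.e. derivative `fm` (expressed as the integral representation),
and `fm ∈ L²[0,1]`. -/
def MemW (m : ℕ) (f fm : ℝ → ℝ) : Prop :=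
  ContDiffOn ℝ (m - 1 : ℕ) f (Icc 0 1) ∧
  IntegrableOn (fun s => fm s ^ 2) (Icc (0 : ℝ) 1) volume ∧
  ∀ x ∈ Icc (0 : ℝ) 1,
    iteratedDerivWithin (m - 1) f (Icc (0 : ℝ) 1) x =
      iteratedDerivWithin (m - 1) f (Icc (0 : ℝ) 1) 0 + ∫ s in (0 : ℝ)..x, fm s

/-- The penalized least squares functional `ψ`, evaluated on `f ∈ W^m_2` whose
a.e. `m`-th derivative is `fm`. -/
def psi (n : ℕ) (t y : Fin n → ℝ) (σ ρ : ℝ → ℝ) (lam : ℝ) (f fm : ℝ → ℝ) : ℝ :=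
  (1 / n) * ∑ i, (σ (t i) ^ 2)⁻¹ * (y i - f (t i)) ^ 2 +
    lam * ∫ s in (0 : ℝ)..1, ρ s * fm s ^ 2

/-- Iterated derivatives (within `[0,1]`) of order `≥ k` of the monomial `y^k` are constant. -/
lemma aux_pow_const : ∀ j k : ℕ, k ≤ j → ∃ c : ℝ, ∀ x ∈ Icc (0 : ℝ) 1,
    iteratedDerivWithin j (fun y : ℝ => y ^ k) (Icc (0 : ℝ) 1) x = c := by
  intro j
  induction j with
  | zero =>
    intro k hk
    obtain rfl : k = 0 := Nat.le_zero.mp hk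
    exact ⟨1, fun x _ => by simp [iteratedDerivWithin_zero]⟩
  | succ j IH =>
    intro k hk
    have hs := uniqueDiffOn_Icc_zero_one
    obtain ⟨c, hc⟩ := IH (k - 1) (by omega)
    refine ⟨(k : ℝ) * c, fun x hx => ?_⟩
    rw [iteratedDerivWithin_succ']
    have hEq : EqOn (derivWithin (fun y : ℝ => y ^ k) (Icc (0 : ℝ) 1))
        (fun y : ℝ => (k : ℝ) * y ^ (k - 1)) (Icc (0 : ℝ) 1) := by
      intro z hz
      rw [DifferentiableAt.derivWithin (differentiableAt_pow k) (hs.uniqueDiffWithinAt hz)]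
      simp [deriv_pow]
    rw [iteratedDerivWithin_congr hEq hx,
      iteratedDerivWithin_const_mul (f := fun y : ℝ => y ^ (k - 1)) hx hs (k : ℝ) ((contDiff_id.pow (k - 1)).contDiffOn.contDiffWithinAt hx),
      hc x hx]

/-- Perturbing an element of `W^m_2` by a monomial of degree `< m` stays in `W^m_2`,
with the same `m`-th derivative. -/
lemma memW_add_monomial (m : ℕ) (hm : 1 ≤ m) (f fm : ℝ → ℝ) (hf : MemW m f fm)
    (ε : ℝ) (k : ℕ) (hk : k < m) :
    MemW m (fun x => f x + ε * x ^ k) fm := by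
  have hs := uniqueDiffOn_Icc_zero_one
  have hq_cd : ContDiff ℝ ((m - 1 : ℕ) : ℕ∞) (fun x : ℝ => ε * x ^ k) :=
    contDiff_const.mul (contDiff_id.pow k)
  obtain ⟨c, hc⟩ := aux_pow_const (m - 1) k (by omega)
  have hqconst : ∀ z ∈ Icc (0 : ℝ) 1,
      iteratedDerivWithin (m - 1) (fun x : ℝ => ε * x ^ k) (Icc (0 : ℝ) 1) z = ε * c := by
    intro z hz
    rw [iteratedDerivWithin_const_mul (f := fun y : ℝ => y ^ k) hz hs ε ((contDiff_id.pow k).contDiffOn.contDiffWithinAt hz), hc z hz]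
  have hadd : ∀ z ∈ Icc (0 : ℝ) 1,
      iteratedDerivWithin (m - 1) (fun x => f x + ε * x ^ k) (Icc (0 : ℝ) 1) z =
        iteratedDerivWithin (m - 1) f (Icc (0 : ℝ) 1) z + ε * c := by
    intro z hz
    have := iteratedDerivWithin_add hz hs (hf.1.contDiffWithinAt hz) (hq_cd.contDiffOn.contDiffWithinAt hz) (f := f)
      (g := fun x : ℝ => ε * x ^ k)
    rw [show (f + fun x : ℝ => ε * x ^ k) = fun x => f x + ε * x ^ k from rfl] at this
    rw [this, hqconst z hz]
  refine ⟨hf.1.add hq_cd.contDiffOn, hf.2.1, fun x hx => ?_⟩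
  have h0 : (0 : ℝ) ∈ Icc (0 : ℝ) 1 := ⟨le_refl _, zero_le_one⟩
  rw [hadd x hx, hadd 0 h0]
  have := hf.2.2 x hx
  linarith

/-- if `f̂` minimizes `ψ` over `W^m_2`, then the weighted residuals are
orthogonal to all polynomials of degree `< m`. -/
theorem minimizer_moment_conditions
    (m n : ℕ) (hm : 1 ≤ m) (hn : 1 ≤ n)
    (t y : Fin n → ℝ) (ht : ∀ i, t i ∈ Icc (0 : ℝ) 1)
    (σ ρ : ℝ → ℝ)
    (hσ : ∀ x ∈ Icc (0 : ℝ) 1, 0 < σ x) (hρ : ∀ x ∈ Icc (0 : ℝ) 1, 0 < ρ x)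
    (lam : ℝ) (hlam : 0 < lam)
    (fhat fhatm : ℝ → ℝ) (hf : MemW m fhat fhatm)
    (hmin : ∀ g gm : ℝ → ℝ, MemW m g gm →
      psi n t y σ ρ lam fhat fhatm ≤ psi n t y σ ρ lam g gm) :
    ∀ k : ℕ, k < m →
      (1 / n) * ∑ i, (σ (t i) ^ 2)⁻¹ * (fhat (t i) - y i) * t i ^ k = 0 := by
  intro k hk
  set B : ℝ := ∑ i, (σ (t i) ^ 2)⁻¹ * (fhat (t i) - y i) * t i ^ k with hB
  set A : ℝ := ∑ i, (σ (t i) ^ 2)⁻¹ * (t i ^ k) ^ 2 with hA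
  have hA0 : 0 ≤ A := Finset.sum_nonneg fun i _ =>
    mul_nonneg (inv_nonneg.mpr (sq_nonneg _)) (sq_nonneg _)
  have hn' : (0 : ℝ) < 1 / n := by
    have : (0 : ℝ) < n := by exact_mod_cast hn
    positivity
  have key : ∀ ε : ℝ, 0 ≤ 2 * ε * B + ε ^ 2 * A := by
    intro ε
    have hmem := memW_add_monomial m hm fhat fhatm hf ε k hk
    have h := hmin _ fhatm hmem
    unfold psi at h
    have expand : ∑ i, (σ (t i) ^ 2)⁻¹ * (y i - (fhat (t i) + ε * t i ^ k)) ^ 2 =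
        ∑ i, (σ (t i) ^ 2)⁻¹ * (y i - fhat (t i)) ^ 2 +
          (2 * ε * B + ε ^ 2 * A) := by
      rw [hB, hA, Finset.mul_sum, Finset.mul_sum, ← Finset.sum_add_distrib,
        ← Finset.sum_add_distrib]
      exact Finset.sum_congr rfl fun i _ => by ring
    rw [expand] at h
    nlinarith [h]
  -- choose ε = -B/(A+1) to force B = 0
  set u : ℝ := (A + 1)⁻¹ with hu'
  have hA1 : (0 : ℝ) < A + 1 := by linarith
  have hu : 0 < u := inv_pos.mpr hA1
  have huA : u * (A + 1) = 1 := inv_mul_cancel₀ (ne_of_gt hA1)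
  have hkey := key (-B * u)
  have h2 : u * A = 1 - u := by linear_combination huA
  have e1 : (-B * u) ^ 2 * A = B ^ 2 * u * (u * A) := by ring
  rw [h2] at e1
  rw [e1] at hkey
  have hB2 : B ^ 2 ≤ 0 := by
    nlinarith [hkey, hu, sq_nonneg (B * u), sq_nonneg B]
  have : B = 0 := by
    have h1 : B ^ 2 = 0 := le_antisymm hB2 (sq_nonneg B)
    exact sq_eq_zero_iff.mp h1
  rw [this, mul_zero]

end
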